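/- arXiv:2009.02676 — 4 statements merged into one kernel-verified Lean document; each statement's English description precedes it below -/
import Mathlib

section
/- Let I = (α,β) be a bounded open interval with Lebesgue measure and |I| = β − α. Let ā : I → ℝ be measurable with 0 < c₁ ≤ ā(x) ≤ c₂ for almost every x ∈ I. Then the linear map T : L²_m(I) → L²_m(I) defined by T v = P_m(ā v) = ā v − (1/|I|)∫_I ā(ξ)v(ξ)dξ is a continuous linear bijection of L²_m(I) onto itself; explicitly, for every w ∈ L²_m(I), the unique v ∈ L²_m(I) with T v = w is given by v = ā^{-1} w − [ (∫_I ā(ξ)^{-1} w(ξ) dξ) / (∫_I ā(ξ)^{-1} dξ) ] · ā^{-1}. -/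
open MeasureTheory

/-- Let `ā` be measurable on `I = (α,β)` with
`0 < c₁ ≤ ā ≤ c₂` a.e.  Then `T v = P_m(ā v) = ā v - (1/|I|)∫ ā v` maps the
zero-mean subspace `L²_m(I)` continuously into itself, and is a bijection of
`L²_m(I)` onto itself whose inverse is given by the explicit formula
`v = ā⁻¹ w - [(∫ ā⁻¹ w)/(∫ ā⁻¹)] ā⁻¹`. -/
theorem stmt5 (α β c₁ c₂ : ℝ) (hαβ : α < β) (hc₁ : 0 < c₁)
    (abar : ℝ → ℝ) (hmeas : Measurable abar)
    (hbd : ∀ᵐ x ∂(volume.restrict (Set.Ioo α β)), c₁ ≤ abar x ∧ abar x ≤ c₂) :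
    letI μ := volume.restrict (Set.Ioo α β)
    letI T : (ℝ → ℝ) → (ℝ → ℝ) :=
      fun v x => abar x * v x - (β - α)⁻¹ * ∫ ξ, abar ξ * v ξ ∂μ
    -- T maps L²_m(I) into L²_m(I) and is continuous
    (∀ v : ℝ → ℝ, MemLp v 2 μ → (∫ x, v x ∂μ) = 0 →
        MemLp (T v) 2 μ ∧ (∫ x, T v x ∂μ) = 0 ∧
        (∫ x, (T v x) ^ 2 ∂μ) ≤ (2 * c₂) ^ 2 * ∫ x, (v x) ^ 2 ∂μ) ∧
    -- T is a bijection of L²_m(I) with the explicit inverse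
    (∀ w : ℝ → ℝ, MemLp w 2 μ → (∫ x, w x ∂μ) = 0 →
        letI v : ℝ → ℝ := fun x => (abar x)⁻¹ * w x -
          ((∫ ξ, (abar ξ)⁻¹ * w ξ ∂μ) / (∫ ξ, (abar ξ)⁻¹ ∂μ)) * (abar x)⁻¹
        MemLp v 2 μ ∧ (∫ x, v x ∂μ) = 0 ∧ T v =ᵐ[μ] w ∧
        ∀ v' : ℝ → ℝ, MemLp v' 2 μ → (∫ x, v' x ∂μ) = 0 →
          T v' =ᵐ[μ] w → v' =ᵐ[μ] v) := by
  beta_reduce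
  set μ := volume.restrict (Set.Ioo α β) with hμdef
  have hβα : (0:ℝ) < β - α := sub_pos.mpr hαβ
  have hβα' : β - α ≠ 0 := ne_of_gt hβα
  have hμuniv : μ.real Set.univ = β - α := by
    simp [hμdef, Measure.real, Measure.restrict_apply_univ, Real.volume_Ioo,
      ENNReal.toReal_ofReal hβα.le]
  haveI : IsFiniteMeasure μ := by
    constructor
    rw [hμdef, Measure.restrict_apply_univ, Real.volume_Ioo]
    exact ENNReal.ofReal_lt_top
  have hμne : μ ≠ 0 := by
    intro h
    rw [h] at hμuniv
    simp at hμuniv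
    linarith
  haveI : (ae μ).NeBot := ae_neBot.mpr hμne
  have hab : ∀ᵐ x ∂μ, c₁ ≤ abar x ∧ abar x ≤ c₂ := hbd
  obtain ⟨x₀, hx₀⟩ := hab.exists
  have hc₂ : 0 < c₂ := lt_of_lt_of_le hc₁ (hx₀.1.trans hx₀.2)
  have hameas : AEStronglyMeasurable abar μ := hmeas.aestronglyMeasurable
  -- multiplication by abar preserves L²
  have havmem : ∀ u : ℝ → ℝ, MemLp u 2 μ → MemLp (fun x => abar x * u x) 2 μ := by
    intro u hu
    refine MemLp.of_le (hu.const_mul c₂) (hameas.mul hu.aestronglyMeasurable) ?_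
    filter_upwards [hab] with x hx
    have h0 : 0 ≤ abar x := le_trans hc₁.le hx.1
    calc ‖abar x * u x‖ = |abar x| * |u x| := by
          rw [Real.norm_eq_abs, abs_mul]
      _ ≤ |c₂| * |u x| := by
          apply mul_le_mul_of_nonneg_right _ (abs_nonneg _)
          rw [abs_of_nonneg h0, abs_of_nonneg hc₂.le]
          exact hx.2
      _ = ‖c₂ * u x‖ := by rw [Real.norm_eq_abs, abs_mul]
  constructor
  · -- Part 1
    intro v hv hv0
    have hav := havmem v hv
    have havi : Integrable (fun x => abar x * v x) μ := hav.integrable one_le_two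
    refine ⟨hav.sub (memLp_const _), ?_, ?_⟩
    · rw [integral_sub havi (integrable_const _), integral_const, hμuniv,
        smul_eq_mul, ← mul_assoc, mul_inv_cancel₀ hβα', one_mul, sub_self]
    · set s := ∫ ξ, abar ξ * v ξ ∂μ with hs
      set m := (β - α)⁻¹ * s with hm
      have hms : m * (β - α) = s := by
        rw [hm]; field_simp
      have hav2 : Integrable (fun x => (abar x * v x) ^ 2) μ := hav.integrable_sq
      have hv2 : Integrable (fun x => (v x) ^ 2) μ := hv.integrable_sq
      have key : (∫ x, (abar x * v x - m) ^ 2 ∂μ)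
          = (∫ x, (abar x * v x) ^ 2 ∂μ) - m ^ 2 * (β - α) := by
        have expand : (fun x => (abar x * v x - m) ^ 2)
            = fun x => ((abar x * v x) ^ 2 - (2 * m) * (abar x * v x)) + m ^ 2 := by
          funext x
          ring
        have hint1 : Integrable (fun x => (abar x * v x) ^ 2 - (2 * m) * (abar x * v x)) μ :=
          hav2.sub (havi.const_mul _)
        rw [expand, integral_add hint1 (integrable_const _),
          integral_sub hav2 (havi.const_mul _), integral_const_mul, integral_const,
          hμuniv, smul_eq_mul, ← hs]
        linear_combination (2 * m) * hms
      have h1 : (∫ x, (abar x * v x) ^ 2 ∂μ) ≤ c₂ ^ 2 * ∫ x, (v x) ^ 2 ∂μ := by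
        rw [← integral_const_mul]
        refine integral_mono_ae hav2 (hv2.const_mul _) ?_
        filter_upwards [hab] with x hx
        have h0 : 0 ≤ abar x := le_trans hc₁.le hx.1
        calc (abar x * v x) ^ 2 = (abar x) ^ 2 * (v x) ^ 2 := by ring
          _ ≤ c₂ ^ 2 * (v x) ^ 2 :=
            mul_le_mul_of_nonneg_right (pow_le_pow_left₀ h0 hx.2 2) (sq_nonneg _)
      have h2 : 0 ≤ ∫ x, (v x) ^ 2 ∂μ := integral_nonneg fun x => sq_nonneg _
      have h3 : 0 ≤ m ^ 2 * (β - α) := mul_nonneg (sq_nonneg _) hβα.le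
      nlinarith [sq_nonneg c₂]
  · -- Part 2
    intro w hw hw0
    have hinvmeas : AEStronglyMeasurable (fun x => (abar x)⁻¹) μ :=
      (hmeas.inv).aestronglyMeasurable
    have hinv_bd : ∀ᵐ x ∂μ, ‖(abar x)⁻¹‖ ≤ ‖c₁⁻¹‖ := by
      filter_upwards [hab] with x hx
      have hpos : 0 < abar x := lt_of_lt_of_le hc₁ hx.1
      rw [Real.norm_eq_abs, Real.norm_eq_abs, abs_of_nonneg (inv_nonneg.mpr hpos.le),
        abs_of_nonneg (inv_nonneg.mpr hc₁.le)]
      exact inv_anti₀ hc₁ hx.1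
    have hinvmem : MemLp (fun x => (abar x)⁻¹) 2 μ :=
      MemLp.of_le (memLp_const c₁⁻¹) hinvmeas hinv_bd
    have hinvw : MemLp (fun x => (abar x)⁻¹ * w x) 2 μ := by
      refine MemLp.of_le (hw.const_mul c₁⁻¹) (hinvmeas.mul hw.aestronglyMeasurable) ?_
      filter_upwards [hinv_bd] with x hx
      rw [Real.norm_eq_abs, abs_mul, Real.norm_eq_abs, abs_mul]
      exact mul_le_mul_of_nonneg_right hx (abs_nonneg _)
    have hinv_int : Integrable (fun x => (abar x)⁻¹) μ := hinvmem.integrable one_le_two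
    have hinvw_int : Integrable (fun x => (abar x)⁻¹ * w x) μ := hinvw.integrable one_le_two
    have hwint : Integrable w μ := hw.integrable one_le_two
    set J := ∫ ξ, (abar ξ)⁻¹ ∂μ with hJ
    have hJpos : 0 < J := by
      have hle : c₂⁻¹ * (β - α) ≤ J := by
        have h := integral_mono_ae (integrable_const c₂⁻¹) hinv_int ?_
        · rw [integral_const, hμuniv, smul_eq_mul] at h
          linarith [h]
        · filter_upwards [hab] with x hx
          have hpos : 0 < abar x := lt_of_lt_of_le hc₁ hx.1
          exact inv_anti₀ hpos hx.2
      have : 0 < c₂⁻¹ * (β - α) := by positivity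
      linarith
    set k := (∫ ξ, (abar ξ)⁻¹ * w ξ ∂μ) / J with hk
    have hvmem : MemLp (fun x => (abar x)⁻¹ * w x - k * (abar x)⁻¹) 2 μ :=
      hinvw.sub (hinvmem.const_mul k)
    have hvint : Integrable (fun x => (abar x)⁻¹ * w x - k * (abar x)⁻¹) μ :=
      hvmem.integrable one_le_two
    have hv0 : (∫ x, ((abar x)⁻¹ * w x - k * (abar x)⁻¹) ∂μ) = 0 := by
      rw [integral_sub hinvw_int (hinv_int.const_mul k), integral_const_mul, ← hJ,
        hk, div_mul_cancel₀ _ hJpos.ne', sub_self]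
    have hav_eq : ∀ᵐ x ∂μ,
        abar x * ((abar x)⁻¹ * w x - k * (abar x)⁻¹) = w x - k := by
      filter_upwards [hab] with x hx
      have hpos : 0 < abar x := lt_of_lt_of_le hc₁ hx.1
      field_simp
    have hsint :
        (∫ ξ, abar ξ * ((abar ξ)⁻¹ * w ξ - k * (abar ξ)⁻¹) ∂μ) = -(k * (β - α)) := by
      rw [integral_congr_ae hav_eq, integral_sub hwint (integrable_const k), hw0,
        integral_const, hμuniv, smul_eq_mul]
      ring
    have hTv : (fun x => abar x * ((abar x)⁻¹ * w x - k * (abar x)⁻¹) -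
        (β - α)⁻¹ * ∫ ξ, abar ξ * ((abar ξ)⁻¹ * w ξ - k * (abar ξ)⁻¹) ∂μ) =ᵐ[μ] w := by
      filter_upwards [hav_eq] with x hx
      simp only [hsint, hx]
      field_simp
      ring
    refine ⟨hvmem, hv0, hTv, ?_⟩
    -- uniqueness
    intro v' hv' hv'0 hTv'
    have hav' := havmem v' hv'
    have hav'i : Integrable (fun x => abar x * v' x) μ := hav'.integrable one_le_two
    have hv'int : Integrable v' μ := hv'.integrable one_le_two
    set s' := ∫ ξ, abar ξ * v' ξ ∂μ with hs'
    set s := ∫ ξ, abar ξ * ((abar ξ)⁻¹ * w ξ - k * (abar ξ)⁻¹) ∂μ with hs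
    set d := (β - α)⁻¹ * (s' - s) with hd
    have hdiff : ∀ᵐ x ∂μ,
        v' x - ((abar x)⁻¹ * w x - k * (abar x)⁻¹) = d * (abar x)⁻¹ := by
      filter_upwards [hTv', hTv, hab] with x h1 h2 hx
      have hpos : 0 < abar x := lt_of_lt_of_le hc₁ hx.1
      have hkey : abar x * (v' x - ((abar x)⁻¹ * w x - k * (abar x)⁻¹)) = d := by
        rw [hd]
        nlinarith [h1, h2]
      field_simp at hkey ⊢
      linarith [hkey]
    have hint0 : (0:ℝ) = d * J := by
      have h := integral_congr_ae hdiff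
      rw [integral_sub hv'int hvint, hv'0, hv0, sub_self, integral_const_mul, ← hJ] at h
      exact h
    have hd0 : d = 0 := by
      rcases mul_eq_zero.mp hint0.symm with h | h
      · exact h
      · exact absurd h hJpos.ne'
    filter_upwards [hdiff] with x hx
    have hz : v' x - ((abar x)⁻¹ * w x - k * (abar x)⁻¹) = 0 := by
      rw [hx, hd0, zero_mul]
    linarith
end

section
/- Let μ be a finite measure on a measurable space and let g : ℝ → ℝ be continuously differentiable with bounded derivative, |g'(ξ)| ≤ M for all ξ ∈ ℝ. Then for every v̄, h ∈ L²(μ), the Nemytskii operator v ↦ g∘v from L²(μ) to L²(μ) is Gâteaux differentiable at v̄ in the direction h with derivative g'(v̄)·h: that is, ‖ (g(v̄ + θh) − g(v̄))/θ − g'(v̄)·h ‖_{L²(μ)} → 0 as θ → 0 (θ real, θ ≠ 0). Moreover h ↦ g'(v̄)·h is a bounded linear operator of L²(μ) with norm at most M. -/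
open MeasureTheory

/-- Let `μ` be a finite measure and `g : ℝ → ℝ` continuously
differentiable with bounded derivative `|g'| ≤ M`.  Then for `v̄, h ∈ L²(μ)`
the Nemytskii operator `v ↦ g∘v` is Gâteaux differentiable at `v̄` in the
direction `h` with derivative `g'(v̄)·h`, which defines a bounded linear
operator of `L²(μ)` of norm at most `M`. -/
theorem stmt7 {Ω : Type*} [MeasurableSpace Ω] (μ : Measure Ω) [IsFiniteMeasure μ]
    (g gd : ℝ → ℝ) (M : ℝ)
    (hderiv : ∀ ξ : ℝ, HasDerivAt g (gd ξ) ξ)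
    (hcont : Continuous gd)
    (hbd : ∀ ξ : ℝ, |gd ξ| ≤ M)
    (vbar h : Ω → ℝ) (hv : MemLp vbar 2 μ) (hh : MemLp h 2 μ) :
    -- Gâteaux differentiability: the L² norm of the difference quotient error
    -- tends to 0 as θ → 0, θ ≠ 0
    Filter.Tendsto
      (fun θ : ℝ => ∫ x,
        ((g (vbar x + θ * h x) - g (vbar x)) / θ - gd (vbar x) * h x) ^ 2 ∂μ)
      (nhdsWithin 0 {(0:ℝ)}ᶜ) (nhds 0) ∧
    -- `h ↦ gd(v̄)·h` is a bounded linear operator of `L²(μ)` with norm ≤ M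
    MemLp (fun x => gd (vbar x) * h x) 2 μ ∧
    (∫ x, (gd (vbar x) * h x) ^ 2 ∂μ) ≤ M ^ 2 * ∫ x, (h x) ^ 2 ∂μ := by
  have hM0 : 0 ≤ M := le_trans (abs_nonneg _) (hbd 0)
  have hg : Continuous g := by
    rw [continuous_iff_continuousAt]
    exact fun x => (hderiv x).continuousAt
  -- Lipschitz bound
  have hlip : LipschitzWith M.toNNReal g := by
    apply lipschitzWith_of_nnnorm_deriv_le (fun x => (hderiv x).differentiableAt)
    intro x
    rw [(hderiv x).deriv]
    rw [← NNReal.coe_le_coe]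
    simpa [Real.coe_toNNReal M hM0] using hbd x
  have key : ∀ (a b θ : ℝ), |g (a + θ * b) - g a| ≤ M * (|θ| * |b|) := by
    intro a b θ
    have := hlip.dist_le_mul (a + θ * b) a
    simpa [Real.dist_eq, abs_mul, Real.coe_toNNReal M hM0] using this
  -- measurability
  have hvm := hv.aestronglyMeasurable
  have hhm := hh.aestronglyMeasurable
  have hgdv : AEStronglyMeasurable (fun x => gd (vbar x)) μ :=
    hcont.comp_aestronglyMeasurable hvm
  have hprod : AEStronglyMeasurable (fun x => gd (vbar x) * h x) μ := hgdv.mul hhm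
  -- pointwise bound for the linear part
  have hptbd : ∀ x, |gd (vbar x) * h x| ≤ M * |h x| := fun x => by
    rw [abs_mul]
    exact mul_le_mul_of_nonneg_right (hbd _) (abs_nonneg _)
  have hmem : MemLp (fun x => gd (vbar x) * h x) 2 μ := by
    refine MemLp.of_le (hh.const_mul M) hprod (Filter.Eventually.of_forall fun x => ?_)
    have := hptbd x
    simp only [Real.norm_eq_abs, abs_mul, abs_of_nonneg hM0] at *
    exact this
  refine ⟨?_, hmem, ?_⟩
  · -- DCT
    have hF_meas : ∀ θ : ℝ, AEStronglyMeasurable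
        (fun x => ((g (vbar x + θ * h x) - g (vbar x)) / θ - gd (vbar x) * h x) ^ 2) μ := by
      intro θ
      simp only [div_eq_mul_inv]
      exact ((((hg.comp_aestronglyMeasurable (hvm.add (hhm.const_mul θ))).sub
        (hg.comp_aestronglyMeasurable hvm)).mul_const θ⁻¹).sub hprod).pow 2
    have hbound_int : Integrable (fun x => (2 * M) ^ 2 * (h x) ^ 2) μ :=
      hh.integrable_sq.const_mul _
    have h_bound : ∀ θ : ℝ, θ ≠ 0 → ∀ x,
        ‖((g (vbar x + θ * h x) - g (vbar x)) / θ - gd (vbar x) * h x) ^ 2‖ ≤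
          (2 * M) ^ 2 * (h x) ^ 2 := by
      intro θ hθ x
      have hq : |(g (vbar x + θ * h x) - g (vbar x)) / θ| ≤ M * |h x| := by
        rw [abs_div]
        rw [div_le_iff₀ (abs_pos.mpr hθ)]
        calc |g (vbar x + θ * h x) - g (vbar x)| ≤ M * (|θ| * |h x|) := key _ _ _
          _ = M * |h x| * |θ| := by ring
      have habs : |(g (vbar x + θ * h x) - g (vbar x)) / θ - gd (vbar x) * h x| ≤
          2 * M * |h x| := by
        calc |(g (vbar x + θ * h x) - g (vbar x)) / θ - gd (vbar x) * h x| ≤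
            |(g (vbar x + θ * h x) - g (vbar x)) / θ| + |gd (vbar x) * h x| := abs_sub _ _
          _ ≤ M * |h x| + M * |h x| := add_le_add hq (hptbd x)
          _ = 2 * M * |h x| := by ring
      have h1 : ((g (vbar x + θ * h x) - g (vbar x)) / θ - gd (vbar x) * h x) ^ 2 ≤
          (2 * M * |h x|) ^ 2 := by
        rw [← sq_abs]
        exact pow_le_pow_left₀ (abs_nonneg _) habs 2
      rw [Real.norm_eq_abs, abs_of_nonneg (sq_nonneg _)]
      calc _ ≤ (2 * M * |h x|) ^ 2 := h1
        _ = (2 * M) ^ 2 * (h x) ^ 2 := by rw [mul_pow, sq_abs]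
    have h_lim : ∀ x, Filter.Tendsto
        (fun θ : ℝ => ((g (vbar x + θ * h x) - g (vbar x)) / θ - gd (vbar x) * h x) ^ 2)
        (nhdsWithin 0 {(0:ℝ)}ᶜ) (nhds 0) := by
      intro x
      set a := vbar x with ha
      set b := h x with hb
      have hu : HasDerivAt (fun θ : ℝ => a + θ * b) b 0 := by
        simpa using ((hasDerivAt_id (0:ℝ)).mul_const b).const_add a
      have hcompd : HasDerivAt (fun θ : ℝ => g (a + θ * b)) (gd a * b) 0 := by
        have := (hderiv (a + 0 * b)).comp 0 hu
        simp only [zero_mul, add_zero] at this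
        exact this
      have hslope := hasDerivAt_iff_tendsto_slope.mp hcompd
      have hslope' : Filter.Tendsto (fun θ : ℝ => (g (a + θ * b) - g a) / θ)
          (nhdsWithin 0 {(0:ℝ)}ᶜ) (nhds (gd a * b)) := by
        refine hslope.congr (fun θ => ?_)
        simp [slope_def_field, div_eq_inv_mul]
      have := (hslope'.sub tendsto_const_nhds (b := gd a * b)).pow 2
      simpa using this
    have := MeasureTheory.tendsto_integral_filter_of_dominated_convergence
      (μ := μ) (F := fun θ : ℝ => fun x =>
        ((g (vbar x + θ * h x) - g (vbar x)) / θ - gd (vbar x) * h x) ^ 2)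
      (f := fun _ => (0:ℝ)) (bound := fun x => (2 * M) ^ 2 * (h x) ^ 2)
      (Filter.Eventually.of_forall fun θ => hF_meas θ)
      (by
        filter_upwards [self_mem_nhdsWithin] with θ hθ
        exact Filter.Eventually.of_forall fun x => h_bound θ hθ x)
      hbound_int
      (Filter.Eventually.of_forall fun x => h_lim x)
    simpa using this
  · have hint1 : Integrable (fun x => (gd (vbar x) * h x) ^ 2) μ := hmem.integrable_sq
    have hint2 : Integrable (fun x => M ^ 2 * (h x) ^ 2) μ := hh.integrable_sq.const_mul _
    calc (∫ x, (gd (vbar x) * h x) ^ 2 ∂μ) ≤ ∫ x, M ^ 2 * (h x) ^ 2 ∂μ := by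
          refine integral_mono hint1 hint2 fun x => ?_
          rw [mul_pow]
          refine mul_le_mul_of_nonneg_right ?_ (sq_nonneg _)
          rw [← sq_abs]
          exact pow_le_pow_left₀ (abs_nonneg _) (hbd _) 2
      _ = M ^ 2 * ∫ x, (h x) ^ 2 ∂μ := integral_const_mul _ _
end

section
/- Let W be a real normed vector space, let s < t be real numbers, let U : ℝ → W and φ : ℝ → ℝ be differentiable at every point of [s,t], let φ̄ ∈ ℝ satisfy φ(τ) > φ̄ for all τ ∈ [s,t], and let θ ∈ (0,1] and K > 0 be constants such that −φ'(τ) ≥ K·(φ(τ) − φ̄)^{1−θ}·‖U'(τ)‖ for every τ ∈ [s,t]. Then (φ(s) − φ̄)^θ − (φ(t) − φ̄)^θ ≥ Kθ·‖U(t) − U(s)‖; in particular ‖U(t) − U(s)‖ ≤ (Kθ)^{-1}·(φ(s) − φ̄)^θ. -/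
/-- The abstract Łojasiewicz–Simon estimate: if on `[s,t]`
we have `φ > φ̄` and `-φ'(τ) ≥ K (φ(τ) - φ̄)^{1-θ} ‖U'(τ)‖`, then
`(φ(s) - φ̄)^θ - (φ(t) - φ̄)^θ ≥ K θ ‖U(t) - U(s)‖`; in particular
`‖U(t) - U(s)‖ ≤ (Kθ)⁻¹ (φ(s) - φ̄)^θ`. -/
theorem stmt11 {W : Type*} [NormedAddCommGroup W] [NormedSpace ℝ W]
    (s t : ℝ) (hst : s < t)
    (U : ℝ → W) (U' : ℝ → W) (φ φ' : ℝ → ℝ) (φbar θ K : ℝ)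
    (hU : ∀ τ ∈ Set.Icc s t, HasDerivAt U (U' τ) τ)
    (hφ : ∀ τ ∈ Set.Icc s t, HasDerivAt φ (φ' τ) τ)
    (hgt : ∀ τ ∈ Set.Icc s t, φbar < φ τ)
    (hθ : θ ∈ Set.Ioc (0:ℝ) 1) (hK : 0 < K)
    (hineq : ∀ τ ∈ Set.Icc s t,
        K * (φ τ - φbar) ^ (1 - θ) * ‖U' τ‖ ≤ -φ' τ) :
    K * θ * ‖U t - U s‖ ≤ (φ s - φbar) ^ θ - (φ t - φbar) ^ θ ∧
    ‖U t - U s‖ ≤ (K * θ)⁻¹ * (φ s - φbar) ^ θ := by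
  obtain ⟨hθ0, hθ1⟩ := hθ
  have hKθ : 0 < K * θ := mul_pos hK hθ0
  set g : ℝ → ℝ := fun τ => (φ τ - φbar) ^ θ with hg
  set g' : ℝ → ℝ := fun τ => θ * (φ τ - φbar) ^ (θ - 1) * φ' τ with hg'
  have hpos : ∀ τ ∈ Set.Icc s t, 0 < φ τ - φbar := fun τ hτ => sub_pos.2 (hgt τ hτ)
  have hgd : ∀ τ ∈ Set.Icc s t, HasDerivAt g (g' τ) τ := by
    intro τ hτ
    have h1 : HasDerivAt (fun x : ℝ => x ^ θ)
        (θ * (φ τ - φbar) ^ (θ - 1)) (φ τ - φbar) :=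
      Real.hasDerivAt_rpow_const (Or.inl (hpos τ hτ).ne')
    have h2 : HasDerivAt (fun x => φ x - φbar) (φ' τ) τ := (hφ τ hτ).sub_const _
    simpa [hg, hg', Function.comp_def, mul_comm, mul_assoc, mul_left_comm] using h1.comp τ h2
  -- key: K θ ‖U' τ‖ ≤ - g' τ on Icc
  have key : ∀ τ ∈ Set.Icc s t, K * θ * ‖U' τ‖ ≤ -g' τ := by
    intro τ hτ
    have hx := hpos τ hτ
    have h := hineq τ hτ
    have hmul := mul_le_mul_of_nonneg_left h
      (le_of_lt (mul_pos hθ0 (Real.rpow_pos_of_pos hx (θ - 1))))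
    have hxpow : (φ τ - φbar) ^ (θ - 1) * (φ τ - φbar) ^ (1 - θ) = 1 := by
      rw [← Real.rpow_add hx]; norm_num
    calc K * θ * ‖U' τ‖
        = θ * (φ τ - φbar) ^ (θ - 1) * (K * (φ τ - φbar) ^ (1 - θ) * ‖U' τ‖) := by
          rw [show θ * (φ τ - φbar) ^ (θ - 1) * (K * (φ τ - φbar) ^ (1 - θ) * ‖U' τ‖)
              = K * θ * (((φ τ - φbar) ^ (θ - 1) * (φ τ - φbar) ^ (1 - θ)) * ‖U' τ‖) by ring,
            hxpow]
          try ring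
      _ ≤ θ * (φ τ - φbar) ^ (θ - 1) * -φ' τ := hmul
      _ = -g' τ := by simp only [hg']; ring
  -- apply fencing theorem with f = U · - U s, B τ = (Kθ)⁻¹ (g s - g τ)
  have main : ‖U t - U s‖ ≤ (K * θ)⁻¹ * (g s - g t) := by
    have := image_norm_le_of_norm_deriv_right_le_deriv_boundary'
      (f := fun τ => U τ - U s) (f' := U') (a := s) (b := t)
      (fun τ hτ => ((hU τ hτ).sub_const _).continuousAt.continuousWithinAt)
      (fun τ hτ => (((hU τ (Set.Ico_subset_Icc_self hτ)).sub_const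
        _).hasDerivWithinAt))
      (B := fun τ => (K * θ)⁻¹ * (g s - g τ)) (B' := fun τ => (K * θ)⁻¹ * (-g' τ))
      (by simp)
      (fun τ hτ => (continuousWithinAt_const.mul
        (continuousWithinAt_const.sub (hgd τ hτ).continuousAt.continuousWithinAt)))
      (fun τ hτ => ((((hgd τ (Set.Ico_subset_Icc_self hτ)).const_sub
        (g s)).const_mul ((K * θ)⁻¹)).hasDerivWithinAt).congr_deriv (by ring))
      (fun τ hτ => by
        rw [← mul_le_mul_iff_right₀ hKθ, ← mul_assoc, mul_inv_cancel₀ hKθ.ne', one_mul]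
        exact key τ (Set.Ico_subset_Icc_self hτ))
    have := this (Set.right_mem_Icc.2 hst.le)
    simpa using this
  constructor
  · rw [← mul_le_mul_iff_right₀ (inv_pos.2 hKθ), ← mul_assoc, inv_mul_cancel₀ hKθ.ne', one_mul]
    exact main
  · refine main.trans ?_
    have : 0 ≤ g t := (Real.rpow_pos_of_pos (hpos t (Set.right_mem_Icc.2 hst.le)) θ).le
    have h2 : g s - g t ≤ g s := by linarith
    exact mul_le_mul_of_nonneg_left h2 (inv_nonneg.2 hKθ.le)
end

section
/- Let X and W be real normed vector spaces and j : X → W a continuous linear map. Let V : [0,∞) → X be continuous, with t ↦ j(V(t)) differentiable on (0,∞); let φ : [0,∞) → ℝ be continuous, nonincreasing and differentiable on (0,∞); let V̄ ∈ X and φ̄ ∈ ℝ with φ(t) > φ̄ for all t ≥ 0. Assume: (i) there are constants θ ∈ (0,1/2], K > 0 and a radius r > 0 such that −φ'(t) ≥ K·(φ(t) − φ̄)^{1−θ}·‖(j∘V)'(t)‖_W whenever t > 0 and ‖V(t) − V̄‖_X < r; (ii) there is K₁ > 0 such that ‖V(t) − V(s)‖_X ≤ K₁·‖j(V(t)) −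 j(V(s))‖_W^{1/2} for all s, t ≥ 0 and ‖V(t) − V̄‖_X ≤ K₁·‖j(V(t)) − j(V̄)‖_W^{1/2} for all t ≥ 0; (iii) there is a sequence t_n → ∞ with ‖V(t_n) − V̄‖_X → 0 and φ(t_n) → φ̄. Then there exists T ≥ 0 such that ‖j(V(t)) − j(V̄)‖_W ≤ (Kθ)^{-1}·(φ(t) − φ̄)^θ for all t ≥ T; in particular j(V(t)) → j(V̄) in W as t → ∞. -/
open Filter

/-- Abstract form of the main convergence theorem.  Under
the angle/gradient differential inequality near `V̄` (i), the interpolation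
estimates (ii), and the existence of an ω-limit sequence (iii), there is a
time `T` after which `‖j(V(t)) - j(V̄)‖ ≤ (Kθ)⁻¹ (φ(t) - φ̄)^θ`; in
particular `j(V(t)) → j(V̄)` as `t → ∞`. -/
theorem stmt12 {X W : Type*} [NormedAddCommGroup X] [NormedSpace ℝ X]
    [NormedAddCommGroup W] [NormedSpace ℝ W]
    (j : X →L[ℝ] W) (V : ℝ → X) (jV' : ℝ → W) (φ φ' : ℝ → ℝ)
    (Vbar : X) (φbar θ K K₁ r : ℝ)
    (hVcont : ContinuousOn V (Set.Ici 0))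
    (hjV : ∀ t > (0:ℝ), HasDerivAt (fun s => j (V s)) (jV' t) t)
    (hφcont : ContinuousOn φ (Set.Ici 0))
    (hφmono : AntitoneOn φ (Set.Ici 0))
    (hφ' : ∀ t > (0:ℝ), HasDerivAt φ (φ' t) t)
    (hgt : ∀ t ≥ (0:ℝ), φbar < φ t)
    (hθ : θ ∈ Set.Ioc (0:ℝ) (1/2)) (hK : 0 < K) (hK₁ : 0 < K₁) (hr : 0 < r)
    -- (i) angle condition + gradient inequality near Vbar
    (hineq : ∀ t > (0:ℝ), ‖V t - Vbar‖ < r →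
        K * (φ t - φbar) ^ (1 - θ) * ‖jV' t‖ ≤ -φ' t)
    -- (ii) interpolation estimates
    (hinterp : ∀ s ≥ (0:ℝ), ∀ t ≥ (0:ℝ),
        ‖V t - V s‖ ≤ K₁ * ‖j (V t) - j (V s)‖ ^ ((1:ℝ)/2))
    (hinterp' : ∀ t ≥ (0:ℝ), ‖V t - Vbar‖ ≤ K₁ * ‖j (V t) - j Vbar‖ ^ ((1:ℝ)/2))
    -- (iii) an ω-limit sequence
    (tseq : ℕ → ℝ) (htseq0 : ∀ n, 0 ≤ tseq n)
    (htseq : Tendsto tseq atTop atTop)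
    (hVseq : Tendsto (fun n => ‖V (tseq n) - Vbar‖) atTop (nhds 0))
    (hφseq : Tendsto (fun n => φ (tseq n)) atTop (nhds φbar)) :
    ∃ T ≥ (0:ℝ),
      (∀ t ≥ T, ‖j (V t) - j Vbar‖ ≤ (K * θ)⁻¹ * (φ t - φbar) ^ θ) ∧
      Tendsto (fun t => j (V t)) atTop (nhds (j Vbar)) := by
  obtain ⟨hθ0, hθhalf⟩ := hθ
  have hKθ : 0 < K * θ := mul_pos hK hθ0
  set ψ : ℝ → ℝ := fun t => (φ t - φbar) ^ θ with hψdef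
  have hpos : ∀ t ≥ (0:ℝ), 0 < φ t - φbar := fun t ht => sub_pos.2 (hgt t ht)
  have hψ0 : ∀ t ≥ (0:ℝ), 0 ≤ ψ t := fun t ht => Real.rpow_nonneg (hpos t ht).le _
  -- ψ is nonincreasing on [0, ∞)
  have hψmono : ∀ s ≥ (0:ℝ), ∀ t, s ≤ t → ψ t ≤ ψ s := by
    intro s hs t hst
    exact Real.rpow_le_rpow (hpos t (hs.trans hst)).le
      (by linarith [hφmono hs (hs.trans hst) hst]) hθ0.le
  -- key differential inequality, integrated via the fencing theorem
  have key : ∀ a b : ℝ, 0 < a → a ≤ b → (∀ s ∈ Set.Icc a b, ‖V s - Vbar‖ < r) →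
      ‖j (V b) - j (V a)‖ ≤ (K * θ)⁻¹ * (ψ a - ψ b) := by
    intro a b ha hab hball
    have hsub : Set.Icc a b ⊆ Set.Ici (0:ℝ) := fun s hs => ha.le.trans hs.1
    have hfc : ContinuousOn (fun u => j (V u) - j (V a)) (Set.Icc a b) :=
      ((j.continuous.comp_continuousOn (hVcont.mono hsub)).sub continuousOn_const)
    have hBc : ContinuousOn (fun u => (K * θ)⁻¹ * (ψ a - ψ u)) (Set.Icc a b) := by
      apply continuousOn_const.mul
      apply continuousOn_const.sub
      exact ((hφcont.mono hsub).sub continuousOn_const).rpow_const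
        (fun u hu => Or.inl (hpos u (hsub hu)).ne')
    have main := image_norm_le_of_norm_deriv_right_le_deriv_boundary' (E := W)
      (f := fun u => j (V u) - j (V a)) (f' := jV')
      (B := fun u => (K * θ)⁻¹ * (ψ a - ψ u))
      (B' := fun u => (K * θ)⁻¹ * (-(φ' u * θ * (φ u - φbar) ^ (θ - 1))))
      hfc
      (fun u hu => by
        have hu0 : 0 < u := ha.trans_le hu.1
        exact (((hjV u hu0).sub_const (j (V a)))).hasDerivWithinAt)
      (by simp) hBc
      (fun u hu => by
        have hu0 : 0 < u := ha.trans_le hu.1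
        have : HasDerivAt (fun u => (K * θ)⁻¹ * (ψ a - ψ u))
            ((K * θ)⁻¹ * (-(φ' u * θ * (φ u - φbar) ^ (θ - 1)))) u := by
          have hd : HasDerivAt (fun u => (φ u - φbar) ^ θ)
              (φ' u * θ * (φ u - φbar) ^ (θ - 1)) u :=
            ((hφ' u hu0).sub_const φbar).rpow_const (Or.inl (hpos u hu0.le).ne')
          simpa using (hasDerivAt_const u (ψ a)).sub hd |>.const_mul ((K * θ)⁻¹)
        exact this.hasDerivWithinAt)
      (fun u hu => by
        have hu0 : 0 < u := ha.trans_le hu.1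
        have h1 := hineq u hu0 (hball u ⟨hu.1, hu.2.le⟩)
        have hc : 0 < (φ u - φbar) ^ (1 - θ) := Real.rpow_pos_of_pos (hpos u hu0.le) _
        have h3 : ‖jV' u‖ ≤ -φ' u / (K * (φ u - φbar) ^ (1 - θ)) := by
          rw [le_div_iff₀ (by positivity)]; nlinarith [h1]
        have hrw : (φ u - φbar) ^ (θ - 1) = ((φ u - φbar) ^ (1 - θ))⁻¹ := by
          rw [← Real.rpow_neg (hpos u hu0.le).le]; ring_nf
        show ‖jV' u‖ ≤ (K * θ)⁻¹ * -(φ' u * θ * (φ u - φbar) ^ (θ - 1))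
        rw [hrw]
        refine h3.trans (le_of_eq ?_)
        field_simp)
    have := main (Set.right_mem_Icc.2 hab)
    simpa using this
  -- ψ along tseq tends to 0
  have hψseq : Tendsto (fun m => ψ (tseq m)) atTop (nhds 0) := by
    have h1 : Tendsto (fun m => φ (tseq m) - φbar) atTop (nhds 0) := by
      simpa using hφseq.sub_const φbar
    have h2 := (Real.continuousAt_rpow_const 0 θ (Or.inr hθ0.le)).tendsto.comp h1
    simpa [Real.zero_rpow hθ0.ne', hψdef, Function.comp_def] using h2
  -- choose the starting time T
  have hEv : ∀ᶠ n in atTop, 0 < tseq n ∧ ‖V (tseq n) - Vbar‖ < r/4 ∧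
      K₁ * ((K*θ)⁻¹ * ψ (tseq n)) ^ ((1:ℝ)/2) < r/4 := by
    have e1 := htseq.eventually_gt_atTop 0
    have e2 := hVseq.eventually_lt_const (by linarith : (0:ℝ) < r/4)
    have e3 : Tendsto (fun n => K₁ * ((K*θ)⁻¹ * ψ (tseq n)) ^ ((1:ℝ)/2)) atTop (nhds 0) := by
      have h1 : Tendsto (fun n => (K*θ)⁻¹ * ψ (tseq n)) atTop (nhds 0) := by
        simpa using hψseq.const_mul ((K*θ)⁻¹)
      have h2 := ((Real.continuousAt_rpow_const 0 ((1:ℝ)/2)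
        (Or.inr (by norm_num))).tendsto.comp h1).const_mul K₁
      simpa [Real.zero_rpow (by norm_num : (1:ℝ)/2 ≠ 0)] using h2
    have e3' := e3.eventually_lt_const (show (0:ℝ) < r/4 by linarith)
    filter_upwards [e1, e2, e3'] with n h1 h2 h3 using ⟨h1, h2, h3⟩
  obtain ⟨N, hN1, hN2, hN3⟩ := hEv.exists
  set T := tseq N with hTdef
  have hT0 : 0 < T := hN1
  -- the trajectory stays in the ball of radius r/2 after time T
  have ball : ∀ t ≥ T, ‖V t - Vbar‖ < r/2 := by
    by_contra hcon
    push_neg at hcon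
    obtain ⟨t₀, ht₀T, ht₀⟩ := hcon
    set S := {t : ℝ | T ≤ t ∧ r/2 ≤ ‖V t - Vbar‖} with hS
    have hSne : S.Nonempty := ⟨t₀, ht₀T, ht₀⟩
    have hSbdd : BddBelow S := ⟨T, fun t ht => ht.1⟩
    have hSclosed : IsClosed S := by
      have hrw : S = Set.Ici T ∩ (fun t => ‖V t - Vbar‖) ⁻¹' (Set.Ici (r/2)) := by
        ext t; simp [hS, Set.mem_setOf_eq]
      rw [hrw]
      exact ContinuousOn.preimage_isClosed_of_isClosed
        (((hVcont.mono (Set.Ici_subset_Ici.2 hT0.le)).sub continuousOn_const).norm)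
        isClosed_Ici isClosed_Ici
    have hts : sInf S ∈ S := hSclosed.csInf_mem hSne hSbdd
    set t₁ := sInf S with ht₁def
    have hTt₁ : T ≤ t₁ := hts.1
    have hTlt : T < t₁ := by
      rcases hTt₁.lt_or_eq with h | h
      · exact h
      · exfalso
        have h2 := hts.2
        rw [← h] at h2
        linarith
    have hsmall : ∀ s, T ≤ s → s < t₁ → ‖V s - Vbar‖ < r/2 := by
      intro s hs hst
      by_contra h
      push_neg at h
      exact absurd (csInf_le hSbdd ⟨hs, h⟩) (not_le.2 hst)
    have ht₁le : ‖V t₁ - Vbar‖ ≤ r/2 := by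
      have hmem : t₁ ∈ closure (Set.Ico T t₁) := by
        rw [closure_Ico hTlt.ne]
        exact Set.right_mem_Icc.2 hTlt.le
      have hne : (nhdsWithin t₁ (Set.Ico T t₁)).NeBot :=
        mem_closure_iff_nhdsWithin_neBot.1 hmem
      have hcw : ContinuousWithinAt (fun t => ‖V t - Vbar‖) (Set.Ico T t₁) t₁ := by
        have h0 : Set.Ico T t₁ ⊆ Set.Ici (0:ℝ) := fun s hs => hT0.le.trans hs.1
        exact (((hVcont t₁ (le_of_lt (hT0.trans_le hTt₁))).sub
          continuousWithinAt_const).norm).mono h0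
      exact le_of_tendsto hcw.tendsto
        (eventually_nhdsWithin_of_forall (fun s hs => (hsmall s hs.1 hs.2).le))
    have hballT : ∀ s ∈ Set.Icc T t₁, ‖V s - Vbar‖ < r := by
      intro s hs
      rcases hs.2.lt_or_eq with h | h
      · exact (hsmall s hs.1 h).trans (by linarith)
      · rw [h]; linarith
    have hkey := key T t₁ hT0 hTlt.le hballT
    have h1 : ‖V t₁ - V T‖ ≤ K₁ * ‖j (V t₁) - j (V T)‖ ^ ((1:ℝ)/2) :=
      hinterp T hT0.le t₁ (hT0.le.trans hTt₁)
    have h2 : ‖j (V t₁) - j (V T)‖ ≤ (K*θ)⁻¹ * ψ T := by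
      refine hkey.trans ?_
      have hψt₁ := hψ0 t₁ (hT0.le.trans hTt₁)
      nlinarith [inv_pos.2 hKθ]
    have h3 : ‖V t₁ - V T‖ ≤ K₁ * ((K*θ)⁻¹ * ψ T) ^ ((1:ℝ)/2) := by
      refine h1.trans ?_
      have := Real.rpow_le_rpow (norm_nonneg _) h2 (by norm_num : (0:ℝ) ≤ 1/2)
      nlinarith
    have h4 : ‖V t₁ - Vbar‖ ≤ ‖V t₁ - V T‖ + ‖V T - Vbar‖ :=
      norm_sub_le_norm_sub_add_norm_sub _ _ _
    have h5 := hts.2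
    linarith
  -- the main estimate for all t ≥ T
  have bound : ∀ t ≥ T, ‖j (V t) - j Vbar‖ ≤ (K*θ)⁻¹ * ψ t := by
    intro t ht
    have ht0 : 0 < t := hT0.trans_le ht
    have hV0 : Tendsto (fun m => V (tseq m) - Vbar) atTop (nhds 0) :=
      tendsto_zero_iff_norm_tendsto_zero.2 hVseq
    have hj0 : Tendsto (fun m => j (V (tseq m)) - j Vbar) atTop (nhds 0) := by
      have h := (j.continuous.tendsto 0).comp hV0
      have heq : (⇑j ∘ fun m => V (tseq m) - Vbar) = fun m => j (V (tseq m)) - j Vbar := by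
        funext m; simp [map_sub]
      rw [heq] at h
      simpa using h
    have hlim : Tendsto (fun m => ‖j (V t) - j (V (tseq m))‖) atTop
        (nhds ‖j (V t) - j Vbar‖) := by
      have h1 : Tendsto (fun m => j (V t) - j (V (tseq m))) atTop
          (nhds (j (V t) - j Vbar)) := by
        have := tendsto_const_nhds (x := j (V t) - j Vbar) (f := atTop (α := ℕ)) |>.sub hj0
        simpa using this
      exact h1.norm
    refine le_of_tendsto hlim ?_
    filter_upwards [htseq.eventually_ge_atTop t] with m hm
    have hball' : ∀ s ∈ Set.Icc t (tseq m), ‖V s - Vbar‖ < r := fun s hs =>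
      (ball s (ht.trans hs.1)).trans (by linarith)
    have hk := key t (tseq m) ht0 hm hball'
    rw [norm_sub_rev]
    refine hk.trans ?_
    have hψm := hψ0 (tseq m) (htseq0 m)
    nlinarith [inv_pos.2 hKθ]
  -- φ tends to φbar at infinity
  have hφtend : Tendsto φ atTop (nhds φbar) := by
    rw [tendsto_order]
    constructor
    · intro b hb
      filter_upwards [eventually_ge_atTop (0:ℝ)] with t ht using hb.trans (hgt t ht)
    · intro b hb
      obtain ⟨m, hm⟩ := (hφseq.eventually_lt_const hb).exists
      filter_upwards [eventually_ge_atTop (tseq m)] with t ht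
      have h0 : (0:ℝ) ≤ tseq m := htseq0 m
      exact lt_of_le_of_lt (hφmono h0 (h0.trans ht) ht) hm
  have hψtend : Tendsto ψ atTop (nhds 0) := by
    have h1 : Tendsto (fun t => φ t - φbar) atTop (nhds 0) := by
      simpa using hφtend.sub_const φbar
    have h2 := (Real.continuousAt_rpow_const 0 θ (Or.inr hθ0.le)).tendsto.comp h1
    simpa [Real.zero_rpow hθ0.ne', hψdef, Function.comp_def] using h2
  have htend : Tendsto (fun t => j (V t)) atTop (nhds (j Vbar)) := by
    rw [tendsto_iff_norm_sub_tendsto_zero]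
    refine squeeze_zero' (g := fun t => (K*θ)⁻¹ * ψ t) (Eventually.of_forall fun t => norm_nonneg _) ?_ ?_
    · filter_upwards [eventually_ge_atTop T] with t ht using bound t ht
    · simpa using hψtend.const_mul ((K*θ)⁻¹)
  exact ⟨T, hT0.le, bound, htend⟩
end
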